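/- Fix an integer d ≥ 4 and λ ∈ ℝ. Let Ψ : ℝ → ℝ be a C² solution of equation (E_λ) with Ψ(t) = O(e^t) as t → −∞. Suppose γ₁, γ₂ : ℝ → ℝ are linearly independent C² solutions of the linearized equation (M_{Ψ,λ}) such that: γ₁(t) − e^t = O(e^{3t}) and γ₁'(t) − e^t = O(e^{3t}) as t → −∞; γ₂ is not identically zero; and for every N > 0, γ₂(t)e^{Nt} → 0 and γ₂'(t)e^{Nt} → 0 as t → +∞. Then the only C² function v : (0,∞) → ℝ satisfying v''(r) + ((d−1)/r)v'(r) − r²v(r) + λv(r) + 3r^{−2}Ψ(log r)²·v(r) = 0 for all r > 0 together with ∫₀^∞ (v(r)² + v'(r)² + r²v(r)²) r^{d−1} dr < ∞ is v ≡ 0. -/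

import Mathlib

open Filter Asymptotics Topology Set MeasureTheory
open scoped ENNReal

set_option maxHeartbeats 2000000

/-- Uniqueness for the second-order linear ODE `η'' = -B η' - q η`. -/
lemma ode_unique (B : ℝ) (q η : ℝ → ℝ) (hq : Continuous q)
    (hη : ContDiff ℝ 2 η)
    (heq : ∀ t, deriv (deriv η) t = -B * deriv η t - q t * η t)
    (t₀ : ℝ) (h0 : η t₀ = 0) (h0' : deriv η t₀ = 0) : ∀ t, η t = 0 := by
  have hdη : Differentiable ℝ η := hη.differentiable (by norm_num)
  have hη' : ContDiff ℝ 1 (deriv η) := by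
    have h2 : ContDiff ℝ (1 + 1 : ℕ) η := by norm_num; exact hη
    exact (contDiff_succ_iff_deriv.mp h2).2.2
  have hdd : ∀ t, HasDerivAt (deriv η) (deriv (deriv η) t) t :=
    fun t => ((hη'.differentiable one_ne_zero) t).hasDerivAt
  set E : ℝ → ℝ := fun t => η t ^ 2 + deriv η t ^ 2 with hEdef
  have hE : ∀ t, HasDerivAt E
      (2 * η t * deriv η t + 2 * deriv η t * deriv (deriv η) t) t := by
    intro t
    have h1 := ((hdη t).hasDerivAt).pow 2
    have h2 := (hdd t).pow 2
    refine (h1.add h2).congr_deriv ?_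
    push_cast
    ring
  have hEcont : Continuous E :=
    ((hdη.continuous.pow 2).add ((hη'.continuous).pow 2))
  have hEnn : ∀ t, 0 ≤ E t := fun t => by positivity
  intro s
  rcases le_total t₀ s with hts | hts
  · -- forward
    obtain ⟨K₀, hK₀⟩ := (isCompact_Icc (a := t₀) (b := s)).exists_bound_of_continuousOn
      (f := fun t => 1 + 2 * |B| + |q t|) (by fun_prop)
    have hK₀1 : ∀ t ∈ Icc t₀ s, 1 + 2 * |B| + |q t| ≤ K₀ := fun t ht =>
      (le_abs_self _).trans (hK₀ t ht)
    have key : ∀ t ∈ Icc t₀ s,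
        2 * η t * deriv η t + 2 * deriv η t * deriv (deriv η) t ≤ K₀ * E t := by
      intro t ht
      have hKt := hK₀1 t ht
      simp only [hEdef]
      rw [heq t]
      have h1 : 0 ≤ (K₀ - (1 + 2 * |B| + |q t|)) * (η t ^ 2 + deriv η t ^ 2) :=
        mul_nonneg (by linarith) (by positivity)
      nlinarith [sq_nonneg (η t + deriv η t), sq_nonneg (η t - deriv η t),
        mul_nonneg (abs_nonneg (q t)) (sq_nonneg (η t + deriv η t)),
        mul_nonneg (abs_nonneg (q t)) (sq_nonneg (η t - deriv η t)),
        mul_nonneg (abs_nonneg B) (sq_nonneg (deriv η t)),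
        le_abs_self (q t), neg_abs_le (q t), le_abs_self B, neg_abs_le B]
    set g : ℝ → ℝ := fun t => E t * Real.exp (-K₀ * t) with hgdef
    have hgd : ∀ t, HasDerivAt g
        ((2 * η t * deriv η t + 2 * deriv η t * deriv (deriv η) t) * Real.exp (-K₀ * t)
          + E t * (-K₀ * Real.exp (-K₀ * t))) t := by
      intro t
      have hexp := ((hasDerivAt_id t).const_mul (-K₀)).exp
      refine ((hE t).mul hexp).congr_deriv ?_
      simp only [id_eq]
      ring
    have hanti : AntitoneOn g (Icc t₀ s) := by
      apply antitoneOn_of_deriv_nonpos (convex_Icc t₀ s)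
        (Continuous.continuousOn (by fun_prop))
      · intro t ht
        exact (hgd t).differentiableAt.differentiableWithinAt
      · intro t ht
        rw [interior_Icc] at ht
        rw [(hgd t).deriv]
        have := key t (Ioo_subset_Icc_self ht)
        have hexp : 0 < Real.exp (-K₀ * t) := Real.exp_pos _
        nlinarith [hEnn t]
    have h1 : g s ≤ g t₀ := hanti (left_mem_Icc.2 hts) (right_mem_Icc.2 hts) hts
    have h2 : g t₀ = 0 := by simp [hgdef, hEdef, h0, h0']
    have h3 : 0 ≤ g s := mul_nonneg (hEnn s) (Real.exp_pos _).le
    have hEs : E s = 0 := by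
      have := mul_nonneg (hEnn s) (Real.exp_pos (-K₀ * s)).le
      have hgs : g s = 0 := le_antisymm (h1.trans_eq h2) h3
      have := Real.exp_pos (-K₀ * s)
      simp only [hgdef] at hgs
      rcases mul_eq_zero.1 hgs with h | h
      · exact h
      · exact absurd h this.ne'
    simp only [hEdef] at hEs
    nlinarith [sq_nonneg (η s), sq_nonneg (deriv η s), hEs]
  · -- backward
    obtain ⟨K₀, hK₀⟩ := (isCompact_Icc (a := s) (b := t₀)).exists_bound_of_continuousOn
      (f := fun t => 1 + 2 * |B| + |q t|) (by fun_prop)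
    have hK₀1 : ∀ t ∈ Icc s t₀, 1 + 2 * |B| + |q t| ≤ K₀ := fun t ht =>
      (le_abs_self _).trans (hK₀ t ht)
    have key : ∀ t ∈ Icc s t₀,
        -(K₀ * E t) ≤ 2 * η t * deriv η t + 2 * deriv η t * deriv (deriv η) t := by
      intro t ht
      have hKt := hK₀1 t ht
      simp only [hEdef]
      rw [heq t]
      have h1 : 0 ≤ (K₀ - (1 + 2 * |B| + |q t|)) * (η t ^ 2 + deriv η t ^ 2) :=
        mul_nonneg (by linarith) (by positivity)
      nlinarith [sq_nonneg (η t + deriv η t), sq_nonneg (η t - deriv η t),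
        mul_nonneg (abs_nonneg (q t)) (sq_nonneg (η t + deriv η t)),
        mul_nonneg (abs_nonneg (q t)) (sq_nonneg (η t - deriv η t)),
        mul_nonneg (abs_nonneg B) (sq_nonneg (deriv η t)),
        le_abs_self (q t), neg_abs_le (q t), le_abs_self B, neg_abs_le B]
    set g : ℝ → ℝ := fun t => E t * Real.exp (K₀ * t) with hgdef
    have hgd : ∀ t, HasDerivAt g
        ((2 * η t * deriv η t + 2 * deriv η t * deriv (deriv η) t) * Real.exp (K₀ * t)
          + E t * (K₀ * Real.exp (K₀ * t))) t := by
      intro t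
      have hexp := ((hasDerivAt_id t).const_mul K₀).exp
      refine ((hE t).mul hexp).congr_deriv ?_
      simp only [id_eq]
      ring
    have hmono : MonotoneOn g (Icc s t₀) := by
      apply monotoneOn_of_deriv_nonneg (convex_Icc s t₀)
        (Continuous.continuousOn (by fun_prop))
      · intro t ht
        exact (hgd t).differentiableAt.differentiableWithinAt
      · intro t ht
        rw [interior_Icc] at ht
        rw [(hgd t).deriv]
        have := key t (Ioo_subset_Icc_self ht)
        have hexp : 0 < Real.exp (K₀ * t) := Real.exp_pos _
        nlinarith [hEnn t]
    have h1 : g s ≤ g t₀ := hmono (left_mem_Icc.2 hts) (right_mem_Icc.2 hts) hts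
    have h2 : g t₀ = 0 := by simp [hgdef, hEdef, h0, h0']
    have h3 : 0 ≤ g s := mul_nonneg (hEnn s) (Real.exp_pos _).le
    have hEs : E s = 0 := by
      have hgs : g s = 0 := le_antisymm (h1.trans_eq h2) h3
      have := Real.exp_pos (K₀ * s)
      simp only [hgdef] at hgs
      rcases mul_eq_zero.1 hgs with h | h
      · exact h
      · exact absurd h this.ne'
    simp only [hEdef] at hEs
    nlinarith [sq_nonneg (η s), sq_nonneg (deriv η s), hEs]


/-- Averaging: a point where the function is below the mean value. -/
lemma exists_lt_on_Ioc (f : ℝ → ℝ≥0∞) {a b : ℝ} {c : ℝ≥0∞}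
    (h : ∫⁻ x in Ioc a b, f x < c * volume (Ioc a b)) : ∃ x ∈ Ioc a b, f x < c := by
  by_contra h'
  push_neg at h'
  have : ∫⁻ x in Ioc a b, c ≤ ∫⁻ x in Ioc a b, f x :=
    lintegral_mono_ae ((ae_restrict_iff' measurableSet_Ioc).2 (ae_of_all _ h'))
  rw [setLIntegral_const] at this
  exact absurd h (not_lt.2 this)

lemma exp_mul_log_eq_zpow (k : ℤ) {r : ℝ} (hr : 0 < r) :
    Real.exp ((k : ℝ) * Real.log r) = r ^ k := by
  rw [mul_comm, ← Real.rpow_def_of_pos hr, Real.rpow_intCast]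

/-- `(x - y - z)^2 ≤ 3(x^2+y^2+z^2)`. -/
lemma three_sq (x y z : ℝ) : (x - y - z)^2 ≤ 3*(x^2 + y^2 + z^2) := by
  nlinarith [sq_nonneg (x + y), sq_nonneg (x + z), sq_nonneg (y - z)]

lemma core_bound (d : ℝ) (hd : 4 ≤ d) (s : ℝ) (hs : 0 ≤ s) (u w p q : ℝ) :
    ((Real.exp s * u * p - q * (Real.exp s * u + Real.exp s ^ 2 * w))
        * Real.exp ((d-4)*s))^2
      ≤ 3 * ((u^2 * Real.exp (d*s)) * (p * Real.exp (d*s))^2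
           + (u^2 * Real.exp (d*s)) * (q * Real.exp (d*s))^2
           + (w^2 * Real.exp (d*s)) * (q * Real.exp (d*s))^2) := by
  set R := Real.exp s with hR
  set E := Real.exp ((d-4)*s) with hE
  set P := Real.exp (d*s) with hP
  have h1 : R^2 * E^2 ≤ P * P^2 := by
    simp only [hR, hE, hP, ← Real.exp_nat_mul, ← Real.exp_add]
    apply Real.exp_le_exp.2
    push_cast
    nlinarith
  have h2 : R^4 * E^2 ≤ P * P^2 := by
    simp only [hR, hE, hP, ← Real.exp_nat_mul, ← Real.exp_add]
    apply Real.exp_le_exp.2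
    push_cast
    nlinarith
  have key := three_sq (R*u*p*E) (q*R*u*E) (q*R^2*w*E)
  have e1 : (R*u*p*E)^2 ≤ (u^2*P)*(p*P)^2 := by
    calc (R*u*p*E)^2 = (u^2*p^2)*(R^2*E^2) := by ring
    _ ≤ (u^2*p^2)*(P*P^2) := by
        apply mul_le_mul_of_nonneg_left h1 (by positivity)
    _ = (u^2*P)*(p*P)^2 := by ring
  have e2 : (q*R*u*E)^2 ≤ (u^2*P)*(q*P)^2 := by
    calc (q*R*u*E)^2 = (u^2*q^2)*(R^2*E^2) := by ring
    _ ≤ (u^2*q^2)*(P*P^2) := by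
        apply mul_le_mul_of_nonneg_left h1 (by positivity)
    _ = (u^2*P)*(q*P)^2 := by ring
  have e3 : (q*R^2*w*E)^2 ≤ (w^2*P)*(q*P)^2 := by
    calc (q*R^2*w*E)^2 = (w^2*q^2)*(R^4*E^2) := by ring
    _ ≤ (w^2*q^2)*(P*P^2) := by
        apply mul_le_mul_of_nonneg_left h2 (by positivity)
    _ = (w^2*P)*(q*P)^2 := by ring
  have hgoal : (R*u*p - q*(R*u + R^2*w))*E = (R*u*p*E) - (q*R*u*E) - (q*R^2*w*E) := by ring
  rw [hgoal]
  linarith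

lemma core_bound2 (d : ℝ) (hd : 4 ≤ d) (s : ℝ) (hs : s ≤ 0) (u w g1 g1' C : ℝ)
    (hC : 0 ≤ C) (h1 : |g1| ≤ C * Real.exp s) (h1' : |g1'| ≤ C * Real.exp s) :
    ((g1 * (Real.exp s * u + Real.exp s ^ 2 * w) - Real.exp s * u * g1')
        * Real.exp ((d-4)*s))^2
      ≤ 3 * (C^2 * (u^2 * Real.exp (d*s)) + C^2 * (w^2 * Real.exp (d*s))
           + C^2 * (u^2 * Real.exp (d*s))) := by
  set R := Real.exp s with hR
  set E := Real.exp ((d-4)*s) with hE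
  set P := Real.exp (d*s) with hP
  have hRpos : 0 < R := Real.exp_pos s
  have h4 : R^4 * E^2 ≤ P := by
    simp only [hR, hE, hP, ← Real.exp_nat_mul, ← Real.exp_add]
    apply Real.exp_le_exp.2
    push_cast
    nlinarith
  have h6 : R^6 * E^2 ≤ P := by
    simp only [hR, hE, hP, ← Real.exp_nat_mul, ← Real.exp_add]
    apply Real.exp_le_exp.2
    push_cast
    nlinarith
  have hg1sq : g1^2 ≤ C^2 * R^2 := by nlinarith [abs_nonneg g1, sq_abs g1]
  have hg1'sq : g1'^2 ≤ C^2 * R^2 := by nlinarith [abs_nonneg g1', sq_abs g1']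
  have key := three_sq (g1*R*u*E) (-(g1*R^2*w*E)) (R*u*g1'*E)
  have e1 : (g1*R*u*E)^2 ≤ C^2*(u^2*P) := by
    calc (g1*R*u*E)^2 = g1^2*(u^2*(R^2*E^2)) := by ring
    _ ≤ (C^2*R^2)*(u^2*(R^2*E^2)) := by
        apply mul_le_mul_of_nonneg_right hg1sq (by positivity)
    _ = (u^2)*(R^4*E^2)*C^2 := by ring
    _ ≤ (u^2)*P*C^2 := by
        apply mul_le_mul_of_nonneg_right (mul_le_mul_of_nonneg_left h4 (by positivity)) (by positivity)
    _ = C^2*(u^2*P) := by ring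
  have e2 : (-(g1*R^2*w*E))^2 ≤ C^2*(w^2*P) := by
    calc (-(g1*R^2*w*E))^2 = g1^2*(w^2*(R^4*E^2)) := by ring
    _ ≤ (C^2*R^2)*(w^2*(R^4*E^2)) := by
        apply mul_le_mul_of_nonneg_right hg1sq (by positivity)
    _ = (w^2)*(R^6*E^2)*C^2 := by ring
    _ ≤ (w^2)*P*C^2 := by
        apply mul_le_mul_of_nonneg_right (mul_le_mul_of_nonneg_left h6 (by positivity)) (by positivity)
    _ = C^2*(w^2*P) := by ring
  have e3 : (R*u*g1'*E)^2 ≤ C^2*(u^2*P) := by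
    calc (R*u*g1'*E)^2 = g1'^2*(u^2*(R^2*E^2)) := by ring
    _ ≤ (C^2*R^2)*(u^2*(R^2*E^2)) := by
        apply mul_le_mul_of_nonneg_right hg1'sq (by positivity)
    _ = (u^2)*(R^4*E^2)*C^2 := by ring
    _ ≤ (u^2)*P*C^2 := by
        apply mul_le_mul_of_nonneg_right (mul_le_mul_of_nonneg_left h4 (by positivity)) (by positivity)
    _ = C^2*(u^2*P) := by ring
  have hgoal : (g1*(R*u + R^2*w) - R*u*g1')*E
      = (g1*R*u*E) - (-(g1*R^2*w*E)) - (R*u*g1'*E) := by ring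
  rw [hgoal]
  linarith

/-- Key step in the proof of Theorem 1 (`theorem-main`): if the two canonical solutions
of the linearized Emden–Fowler equation (the one decaying like `e^t` at `-∞` and the one
decaying faster than any exponential at `+∞`) are linearly independent, then the only
solution `v` of `L v = 0` lying in the radial energy space is `v ≡ 0`. -/
theorem stmt_8 (d : ℤ) (hd : 4 ≤ d) (lam : ℝ)
    (Ψ γ₁ γ₂ : ℝ → ℝ)
    (hΨC : ContDiff ℝ 2 Ψ)
    (hΨeq : ∀ t : ℝ, deriv (deriv Ψ) t + ((d : ℝ) - 4) * deriv Ψ t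
      + (3 - (d : ℝ)) * Ψ t + (Ψ t) ^ 3
      = -lam * Real.exp (2 * t) * Ψ t + Real.exp (4 * t) * Ψ t)
    (hΨasym : Ψ =O[atBot] fun t : ℝ => Real.exp t)
    (hγ₁C : ContDiff ℝ 2 γ₁) (hγ₂C : ContDiff ℝ 2 γ₂)
    (hγ₁eq : ∀ t : ℝ, deriv (deriv γ₁) t + ((d : ℝ) - 4) * deriv γ₁ t
      + (3 - (d : ℝ)) * γ₁ t + 3 * (Ψ t) ^ 2 * γ₁ t
      + lam * Real.exp (2 * t) * γ₁ t - Real.exp (4 * t) * γ₁ t = 0)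
    (hγ₂eq : ∀ t : ℝ, deriv (deriv γ₂) t + ((d : ℝ) - 4) * deriv γ₂ t
      + (3 - (d : ℝ)) * γ₂ t + 3 * (Ψ t) ^ 2 * γ₂ t
      + lam * Real.exp (2 * t) * γ₂ t - Real.exp (4 * t) * γ₂ t = 0)
    (hindep : ∀ c₁ c₂ : ℝ, (∀ t : ℝ, c₁ * γ₁ t + c₂ * γ₂ t = 0) → c₁ = 0 ∧ c₂ = 0)
    (hγ₁asym : (fun t : ℝ => γ₁ t - Real.exp t) =O[atBot] fun t : ℝ => Real.exp (3 * t))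
    (hγ₁'asym : (fun t : ℝ => deriv γ₁ t - Real.exp t)
      =O[atBot] fun t : ℝ => Real.exp (3 * t))
    (hγ₂ne : ∃ t : ℝ, γ₂ t ≠ 0)
    (hγ₂dec : ∀ N > (0 : ℝ),
      Tendsto (fun t : ℝ => γ₂ t * Real.exp (N * t)) atTop (𝓝 0) ∧
      Tendsto (fun t : ℝ => deriv γ₂ t * Real.exp (N * t)) atTop (𝓝 0))
    (v : ℝ → ℝ) (hvC : ContDiffOn ℝ 2 v (Set.Ioi 0))
    (hveq : ∀ r > (0 : ℝ), deriv (deriv v) r + ((d : ℝ) - 1) / r * deriv v r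
      - r ^ 2 * v r + lam * v r + 3 * (Ψ (Real.log r)) ^ 2 / r ^ 2 * v r = 0)
    (hvint : ∫⁻ r in Set.Ioi (0 : ℝ),
        ENNReal.ofReal (((v r) ^ 2 + (deriv v r) ^ 2 + r ^ 2 * (v r) ^ 2) * r ^ (d - 1))
      < ⊤) :
    ∀ r > (0 : ℝ), v r = 0 := by
  have hopen : IsOpen (Ioi (0:ℝ)) := isOpen_Ioi
  -- basic derivative facts for v
  have hv1 : ∀ r ∈ Ioi (0:ℝ), HasDerivAt v (deriv v r) r := fun r hr =>
    ((hvC.contDiffAt (hopen.mem_nhds hr)).differentiableAt (by norm_num)).hasDerivAt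
  have hvd : ContDiffOn ℝ 1 (deriv v) (Ioi 0) := hvC.deriv_of_isOpen hopen (by norm_num)
  have hv2 : ∀ r ∈ Ioi (0:ℝ), HasDerivAt (deriv v) (deriv (deriv v) r) r := fun r hr =>
    ((hvd.contDiffAt (hopen.mem_nhds hr)).differentiableAt one_ne_zero).hasDerivAt
  -- the function γ and its derivatives
  set γ : ℝ → ℝ := fun t => Real.exp t * v (Real.exp t) with hγdef
  set G1 : ℝ → ℝ := fun t => Real.exp t * v (Real.exp t)
      + Real.exp t ^ 2 * deriv v (Real.exp t) with hG1
  set G2 : ℝ → ℝ := fun t => Real.exp t * v (Real.exp t)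
      + 3 * Real.exp t ^ 2 * deriv v (Real.exp t)
      + Real.exp t ^ 3 * deriv (deriv v) (Real.exp t) with hG2
  have hγd : ∀ t, HasDerivAt γ (G1 t) t := by
    intro t
    have he : HasDerivAt Real.exp (Real.exp t) t := Real.hasDerivAt_exp t
    have hcomp : HasDerivAt (fun t => v (Real.exp t)) (deriv v (Real.exp t) * Real.exp t) t :=
      (hv1 _ (Real.exp_pos t)).comp t he
    have := he.mul hcomp
    refine this.congr_deriv ?_
    simp only [hG1]
    ring
  have hγ1d : ∀ t, HasDerivAt G1 (G2 t) t := by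
    intro t
    have he : HasDerivAt Real.exp (Real.exp t) t := Real.hasDerivAt_exp t
    have hcomp : HasDerivAt (fun t => v (Real.exp t)) (deriv v (Real.exp t) * Real.exp t) t :=
      (hv1 _ (Real.exp_pos t)).comp t he
    have hcomp2 : HasDerivAt (fun t => deriv v (Real.exp t))
        (deriv (deriv v) (Real.exp t) * Real.exp t) t :=
      (hv2 _ (Real.exp_pos t)).comp t he
    have hsq : HasDerivAt (fun t => Real.exp t ^ 2) (2 * Real.exp t ^ 1 * Real.exp t) t :=
      he.pow 2
    have := (he.mul hcomp).add (hsq.mul hcomp2)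
    refine this.congr_deriv ?_
    simp only [hG1, hG2]
    ring
  have hγderiv : deriv γ = G1 := funext fun t => (hγd t).deriv
  have hγ2d : ∀ t, HasDerivAt (deriv γ) (G2 t) t := by
    intro t; rw [hγderiv]; exact hγ1d t
  -- γ satisfies the linearized equation
  have hγG : ∀ t, G2 t + ((d:ℝ) - 4) * G1 t + (3 - (d:ℝ)) * γ t + 3 * Ψ t ^ 2 * γ t
      + lam * Real.exp (2 * t) * γ t - Real.exp (4 * t) * γ t = 0 := by
    intro t
    have hr : (0:ℝ) < Real.exp t := Real.exp_pos t
    have H := hveq (Real.exp t) hr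
    rw [Real.log_exp] at H
    have h2 : Real.exp (2 * t) = Real.exp t ^ 2 := Real.exp_nat_mul t 2 ▸ by norm_num
    have h4 : Real.exp (4 * t) = Real.exp t ^ 4 := Real.exp_nat_mul t 4 ▸ by norm_num
    simp only [hγdef, hG1, hG2, h2, h4]
    field_simp at H
    nlinarith [H, sq_nonneg (Real.exp t)]
  -- second derivatives of γ₁ γ₂
  have hγ₁' : ContDiff ℝ 1 (deriv γ₁) := by
    have h2 : ContDiff ℝ (1 + 1 : ℕ) γ₁ := by norm_num; exact hγ₁C
    exact (contDiff_succ_iff_deriv.mp h2).2.2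
  have hγ₂' : ContDiff ℝ 1 (deriv γ₂) := by
    have h2 : ContDiff ℝ (1 + 1 : ℕ) γ₂ := by norm_num; exact hγ₂C
    exact (contDiff_succ_iff_deriv.mp h2).2.2
  have hγ₁d : ∀ t, HasDerivAt γ₁ (deriv γ₁ t) t :=
    fun t => ((hγ₁C.differentiable (by norm_num)) t).hasDerivAt
  have hγ₂d : ∀ t, HasDerivAt γ₂ (deriv γ₂ t) t :=
    fun t => ((hγ₂C.differentiable (by norm_num)) t).hasDerivAt
  have hγ₁dd : ∀ t, HasDerivAt (deriv γ₁) (deriv (deriv γ₁) t) t :=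
    fun t => ((hγ₁'.differentiable one_ne_zero) t).hasDerivAt
  have hγ₂dd : ∀ t, HasDerivAt (deriv γ₂) (deriv (deriv γ₂) t) t :=
    fun t => ((hγ₂'.differentiable one_ne_zero) t).hasDerivAt
  -- exponential weight
  have hXd : ∀ t, HasDerivAt (fun t => Real.exp (((d:ℝ) - 4) * t))
      (((d:ℝ) - 4) * Real.exp (((d:ℝ) - 4) * t)) t := by
    intro t
    have := ((hasDerivAt_id t).const_mul ((d:ℝ) - 4)).exp
    simpa [mul_comm] using this
  -- the three weighted Wronskians
  set A : ℝ → ℝ := fun t => (γ t * deriv γ₂ t - γ₂ t * G1 t)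
      * Real.exp (((d:ℝ) - 4) * t) with hAdef
  set Bf : ℝ → ℝ := fun t => (γ₁ t * G1 t - γ t * deriv γ₁ t)
      * Real.exp (((d:ℝ) - 4) * t) with hBdef
  set Wf : ℝ → ℝ := fun t => (γ₁ t * deriv γ₂ t - γ₂ t * deriv γ₁ t)
      * Real.exp (((d:ℝ) - 4) * t) with hWdef
  have hAd : ∀ t, HasDerivAt A 0 t := by
    intro t
    have h := (((hγd t).mul (hγ₂dd t)).sub ((hγ₂d t).mul (hγ1d t))).mul (hXd t)
    refine h.congr_deriv ?_
    simp only [Pi.mul_apply, Pi.sub_apply]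
    symm
    have e2 := hγ₂eq t
    have eG := hγG t
    linear_combination (Real.exp (((d:ℝ) - 4) * t)) * (γ₂ t * eG - γ t * e2)
  have hBd : ∀ t, HasDerivAt Bf 0 t := by
    intro t
    have h := (((hγ₁d t).mul (hγ1d t)).sub ((hγd t).mul (hγ₁dd t))).mul (hXd t)
    refine h.congr_deriv ?_
    simp only [Pi.mul_apply, Pi.sub_apply]
    symm
    have e1 := hγ₁eq t
    have eG := hγG t
    linear_combination (Real.exp (((d:ℝ) - 4) * t)) * (γ t * e1 - γ₁ t * eG)
  have hWd : ∀ t, HasDerivAt Wf 0 t := by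
    intro t
    have h := (((hγ₁d t).mul (hγ₂dd t)).sub ((hγ₂d t).mul (hγ₁dd t))).mul (hXd t)
    refine h.congr_deriv ?_
    simp only [Pi.mul_apply, Pi.sub_apply]
    symm
    have e1 := hγ₁eq t
    have e2 := hγ₂eq t
    linear_combination (Real.exp (((d:ℝ) - 4) * t)) * (γ₂ t * e1 - γ₁ t * e2)
  have hAconst : ∀ s t : ℝ, A s = A t :=
    is_const_of_deriv_eq_zero (fun t => (hAd t).differentiableAt)
      (fun t => (hAd t).deriv)
  have hBconst : ∀ s t : ℝ, Bf s = Bf t :=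
    is_const_of_deriv_eq_zero (fun t => (hBd t).differentiableAt)
      (fun t => (hBd t).deriv)
  have hWconst : ∀ s t : ℝ, Wf s = Wf t :=
    is_const_of_deriv_eq_zero (fun t => (hWd t).differentiableAt)
      (fun t => (hWd t).deriv)
  -- measure theoretic part
  set g : ℝ → ℝ≥0∞ := fun r =>
    ENNReal.ofReal (((v r) ^ 2 + (deriv v r) ^ 2 + r ^ 2 * (v r) ^ 2) * r ^ (d - 1)) with hgdef
  set μ : Measure ℝ := (volume.restrict (Ioi 0)).withDensity g with hμdef
  have hμs : ∀ s : Set ℝ, MeasurableSet s → s ⊆ Ioi 0 → μ s = ∫⁻ r in s, g r := by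
    intro s hs hsub
    rw [hμdef, withDensity_apply _ hs, Measure.restrict_restrict hs,
      inter_eq_self_of_subset_left hsub]
  have hμtop : μ univ ≠ ⊤ := by
    rw [hμdef, withDensity_apply _ MeasurableSet.univ, Measure.restrict_univ]
    exact ne_of_lt hvint
  have hHnn : ∀ r : ℝ, 0 < r →
      0 ≤ ((v r) ^ 2 + (deriv v r) ^ 2 + r ^ 2 * (v r) ^ 2) * r ^ (d - 1) := by
    intro r hr; positivity
  have hsel : ∀ a b : ℝ, 0 < a → a < b → ∀ c : ℝ, 0 ≤ c →
      μ (Ioc a b) < ENNReal.ofReal c * ENNReal.ofReal (b - a) →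
      ∃ r, a < r ∧ r ≤ b ∧
        ((v r) ^ 2 + (deriv v r) ^ 2 + r ^ 2 * (v r) ^ 2) * r ^ (d - 1) < c := by
    intro a b ha hab c hc hlt
    have h1 : ∫⁻ x in Ioc a b, g x < ENNReal.ofReal c * volume (Ioc a b) := by
      rw [Real.volume_Ioc, ← hμs _ measurableSet_Ioc (fun x hx => lt_trans ha hx.1)]
      exact hlt
    obtain ⟨r, hrmem, hrlt⟩ := exists_lt_on_Ioc g h1
    refine ⟨r, hrmem.1, hrmem.2, ?_⟩
    have hr0 : 0 < r := lt_trans ha hrmem.1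
    simp only [hgdef] at hrlt
    exact (ENNReal.ofReal_lt_ofReal_iff_of_nonneg (hHnn r hr0)).1 hrlt
  -- tails tend to zero
  have hμfin : ∀ s : Set ℝ, μ s ≠ ⊤ :=
    fun s => ne_top_of_le_ne_top hμtop (measure_mono (subset_univ _))
  have hT0 : Tendsto (fun n : ℕ => μ (Ioi ((n:ℝ) + 1))) atTop (𝓝 0) := by
    have h := tendsto_measure_iInter_atTop (μ := μ) (s := fun n : ℕ => Ioi ((n:ℝ)+1))
      (fun n => measurableSet_Ioi.nullMeasurableSet)
      (fun m n hmn => Ioi_subset_Ioi (by exact_mod_cast add_le_add_left (Nat.cast_le.2 hmn) 1))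
      ⟨0, hμfin _⟩
    have he : (⋂ n : ℕ, Ioi ((n:ℝ)+1)) = ∅ := by
      ext x
      simp only [mem_iInter, mem_Ioi, mem_empty_iff_false, iff_false, not_forall, not_lt]
      obtain ⟨n, hn⟩ := exists_nat_gt x
      exact ⟨n, by linarith⟩
    rw [he] at h
    simpa [Function.comp_def] using h
  have hS0 : Tendsto (fun n : ℕ => μ (Ioc 0 ((n:ℝ) + 1)⁻¹)) atTop (𝓝 0) := by
    have h := tendsto_measure_iInter_atTop (μ := μ) (s := fun n : ℕ => Ioc 0 ((n:ℝ)+1)⁻¹)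
      (fun n => measurableSet_Ioc.nullMeasurableSet)
      (fun m n hmn => Ioc_subset_Ioc_right (by
        apply inv_anti₀ (by positivity)
        exact_mod_cast add_le_add_left (Nat.cast_le.2 hmn) 1))
      ⟨0, hμfin _⟩
    have he : (⋂ n : ℕ, Ioc (0:ℝ) ((n:ℝ)+1)⁻¹) = ∅ := by
      ext x
      simp only [mem_iInter, mem_Ioc, mem_empty_iff_false, iff_false, not_forall]
      by_cases hx : 0 < x
      · obtain ⟨n, hn⟩ := exists_nat_gt x⁻¹
        refine ⟨n, fun h => ?_⟩
        have e1 : x * ((n:ℝ)+1) ≤ ((n:ℝ)+1)⁻¹ * ((n:ℝ)+1) :=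
          mul_le_mul_of_nonneg_right h.2 (by positivity)
        rw [inv_mul_cancel₀ (by positivity)] at e1
        have e2 : x * x⁻¹ = 1 := mul_inv_cancel₀ hx.ne'
        nlinarith [mul_lt_mul_of_pos_left hn hx]
      · exact ⟨0, fun h => hx h.1⟩
    rw [he] at h
    simpa [Function.comp_def] using h
  -- selection at +infinity
  have hselp : ∀ n : ℕ, ∃ r : ℝ, (n:ℝ)+1 < r ∧ r ≤ 2*((n:ℝ)+1) ∧
      (v r)^2 * r^d ≤ 2*((μ (Ioi ((n:ℝ)+1))).toReal + ((n:ℝ)+1)⁻¹) ∧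
      (deriv v r)^2 * r^d ≤ 2*((μ (Ioi ((n:ℝ)+1))).toReal + ((n:ℝ)+1)⁻¹) := by
    intro n
    set a : ℝ := (n:ℝ)+1 with ha
    have ha0 : 0 < a := by positivity
    set T := μ (Ioi a) with hT
    have hTne : T ≠ ⊤ := hμfin _
    set c : ℝ := (T.toReal + a⁻¹)/a with hc
    have hc0 : 0 ≤ c := by positivity
    have hμlt : μ (Ioc a (2*a)) < ENNReal.ofReal c * ENNReal.ofReal (2*a - a) := by
      have h1 : μ (Ioc a (2*a)) ≤ T := measure_mono (fun x hx => hx.1)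
      have h2 : T < ENNReal.ofReal (T.toReal + a⁻¹) :=
        (ENNReal.lt_ofReal_iff_toReal_lt hTne).2 (lt_add_of_pos_right _ (inv_pos.2 ha0))
      have h3 : ENNReal.ofReal (T.toReal + a⁻¹) = ENNReal.ofReal c * ENNReal.ofReal (2*a - a) := by
        rw [← ENNReal.ofReal_mul hc0]
        congr 1
        rw [hc]; field_simp
        ring
      calc μ (Ioc a (2*a)) ≤ T := h1
      _ < _ := h3 ▸ h2
    obtain ⟨r, hr1, hr2, hr3⟩ := hsel a (2*a) ha0 (by linarith) c hc0 hμlt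
    have hr0 : 0 < r := lt_trans ha0 hr1
    have hrd : r ^ (d-1) * r = r ^ d := by
      rw [← zpow_add_one₀ (ne_of_gt hr0), sub_add_cancel]
    have hrdpos : (0:ℝ) < r ^ d := zpow_pos hr0 d
    have hbig : ((v r)^2 + (deriv v r)^2 + r^2*(v r)^2) * r^(d-1) * r < c * (2*a) :=
      calc _ < c * r := mul_lt_mul_of_pos_right hr3 hr0
      _ ≤ c * (2*a) := mul_le_mul_of_nonneg_left hr2 hc0
    have hca : c * (2*a) = 2*(T.toReal + a⁻¹) := by rw [hc]; field_simp
    have hkey : ((v r)^2 + (deriv v r)^2) * r^d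
        ≤ ((v r)^2 + (deriv v r)^2 + r^2*(v r)^2) * r^(d-1) * r := by
      rw [mul_assoc, hrd]
      apply mul_le_mul_of_nonneg_right _ hrdpos.le
      nlinarith [sq_nonneg (r * v r)]
    refine ⟨r, hr1, hr2, ?_, ?_⟩ <;>
      nlinarith [hkey, hbig, hca, mul_nonneg (sq_nonneg (deriv v r)) hrdpos.le,
        mul_nonneg (sq_nonneg (v r)) hrdpos.le]
  -- selection near 0
  have hseln : ∀ n : ℕ, ∃ r : ℝ, (2*((n:ℝ)+1))⁻¹ < r ∧ r ≤ ((n:ℝ)+1)⁻¹ ∧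
      (v r)^2 * r^d ≤ 2*((μ (Ioc 0 ((n:ℝ)+1)⁻¹)).toReal + ((n:ℝ)+1)⁻¹) ∧
      (deriv v r)^2 * r^d ≤ 2*((μ (Ioc 0 ((n:ℝ)+1)⁻¹)).toReal + ((n:ℝ)+1)⁻¹) := by
    intro n
    set a : ℝ := (n:ℝ)+1 with ha
    have ha0 : 0 < a := by positivity
    have ha1 : 1 ≤ a := by simp [ha]
    set S := μ (Ioc 0 a⁻¹) with hS
    have hSne : S ≠ ⊤ := hμfin _
    set c : ℝ := (S.toReal + a⁻¹) * (2*a) with hc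
    have hc0 : 0 ≤ c := by positivity
    have hiv : (2*a)⁻¹ < a⁻¹ := by
      apply inv_strictAnti₀ ha0
      linarith
    have hμlt : μ (Ioc (2*a)⁻¹ a⁻¹) < ENNReal.ofReal c * ENNReal.ofReal (a⁻¹ - (2*a)⁻¹) := by
      have h1 : μ (Ioc (2*a)⁻¹ a⁻¹) ≤ S := by
        apply measure_mono
        intro x hx
        exact ⟨lt_trans (by positivity) hx.1, hx.2⟩
      have h2 : S < ENNReal.ofReal (S.toReal + a⁻¹) :=
        (ENNReal.lt_ofReal_iff_toReal_lt hSne).2 (lt_add_of_pos_right _ (inv_pos.2 ha0))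
      have h3 : ENNReal.ofReal (S.toReal + a⁻¹)
          = ENNReal.ofReal c * ENNReal.ofReal (a⁻¹ - (2*a)⁻¹) := by
        rw [← ENNReal.ofReal_mul hc0]
        congr 1
        rw [hc]; field_simp
        ring
      calc μ (Ioc (2*a)⁻¹ a⁻¹) ≤ S := h1
      _ < _ := h3 ▸ h2
    obtain ⟨r, hr1, hr2, hr3⟩ := hsel (2*a)⁻¹ a⁻¹ (by positivity) hiv c hc0 hμlt
    have hr0 : 0 < r := lt_trans (by positivity) hr1
    have hrd : r ^ (d-1) * r = r ^ d := by
      rw [← zpow_add_one₀ (ne_of_gt hr0), sub_add_cancel]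
    have hrdpos : (0:ℝ) < r ^ d := zpow_pos hr0 d
    have hbig : ((v r)^2 + (deriv v r)^2 + r^2*(v r)^2) * r^(d-1) * r < c * a⁻¹ :=
      calc _ < c * r := mul_lt_mul_of_pos_right hr3 hr0
      _ ≤ c * a⁻¹ := mul_le_mul_of_nonneg_left hr2 hc0
    have hca : c * a⁻¹ = 2*(S.toReal + a⁻¹) := by rw [hc]; field_simp
    have hkey : ((v r)^2 + (deriv v r)^2) * r^d
        ≤ ((v r)^2 + (deriv v r)^2 + r^2*(v r)^2) * r^(d-1) * r := by
      rw [mul_assoc, hrd]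
      apply mul_le_mul_of_nonneg_right _ hrdpos.le
      nlinarith [sq_nonneg (r * v r)]
    refine ⟨r, hr1, hr2, ?_, ?_⟩ <;>
      nlinarith [hkey, hbig, hca, mul_nonneg (sq_nonneg (deriv v r)) hrdpos.le,
        mul_nonneg (sq_nonneg (v r)) hrdpos.le]
  choose rp hrp1 hrp2 hrp3 hrp4 using hselp
  choose rn hrn1 hrn2 hrn3 hrn4 using hseln
  have hrp0 : ∀ n : ℕ, (0:ℝ) < rp n := fun n => lt_trans (by positivity) (hrp1 n)
  have hrn0 : ∀ n : ℕ, (0:ℝ) < rn n := fun n => lt_trans (by positivity) (hrn1 n)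
  -- limits of the small quantities
  have hDp : Tendsto (fun n : ℕ => 2*((μ (Ioi ((n:ℝ)+1))).toReal + ((n:ℝ)+1)⁻¹))
      atTop (𝓝 0) := by
    have h1 : Tendsto (fun n : ℕ => (μ (Ioi ((n:ℝ)+1))).toReal) atTop (𝓝 0) := by
      have := (ENNReal.tendsto_toReal (a := 0) (by simp)).comp hT0
      simpa [Function.comp_def] using this
    have h2 : Tendsto (fun n : ℕ => ((n:ℝ)+1)⁻¹) atTop (𝓝 0) := by
      simpa [one_div] using tendsto_one_div_add_atTop_nhds_zero_nat (𝕜 := ℝ)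
    have := (h1.add h2).const_mul 2
    simpa using this
  have hDn : Tendsto (fun n : ℕ => 2*((μ (Ioc 0 ((n:ℝ)+1)⁻¹)).toReal + ((n:ℝ)+1)⁻¹))
      atTop (𝓝 0) := by
    have h1 : Tendsto (fun n : ℕ => (μ (Ioc 0 ((n:ℝ)+1)⁻¹)).toReal) atTop (𝓝 0) := by
      have := (ENNReal.tendsto_toReal (a := 0) (by simp)).comp hS0
      simpa [Function.comp_def] using this
    have h2 : Tendsto (fun n : ℕ => ((n:ℝ)+1)⁻¹) atTop (𝓝 0) := by
      simpa [one_div] using tendsto_one_div_add_atTop_nhds_zero_nat (𝕜 := ℝ)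
    have := (h1.add h2).const_mul 2
    simpa using this
  have htp : Tendsto (fun n : ℕ => Real.log (rp n)) atTop atTop :=
    Real.tendsto_log_atTop.comp (tendsto_atTop_mono (fun n => (hrp1 n).le)
      (tendsto_atTop_add_const_right _ 1 tendsto_natCast_atTop_atTop))
  have htn : Tendsto (fun n : ℕ => Real.log (rn n)) atTop atBot := by
    have hb : Tendsto (fun n : ℕ => Real.log (((n:ℝ)+1)⁻¹)) atTop atBot := by
      have h1 : Tendsto (fun n : ℕ => Real.log ((n:ℝ)+1)) atTop atTop :=
        Real.tendsto_log_atTop.comp (tendsto_atTop_add_const_right _ 1 tendsto_natCast_atTop_atTop)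
      simp only [Real.log_inv]
      exact tendsto_neg_atTop_atBot.comp h1
    exact tendsto_atBot_mono (fun n => Real.log_le_log (hrn0 n) (hrn2 n)) hb
  have hd4 : (4:ℝ) ≤ (d:ℝ) := by exact_mod_cast hd
  obtain ⟨hK, hK'⟩ := hγ₂dec (d:ℝ) (by linarith)
  have hKn : Tendsto (fun n : ℕ => γ₂ (Real.log (rp n))
      * Real.exp ((d:ℝ) * Real.log (rp n))) atTop (𝓝 0) := hK.comp htp
  have hK'n : Tendsto (fun n : ℕ => deriv γ₂ (Real.log (rp n))
      * Real.exp ((d:ℝ) * Real.log (rp n))) atTop (𝓝 0) := hK'.comp htp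
  -- sequences in exponential form
  set Ap : ℕ → ℝ := fun n =>
    v (Real.exp (Real.log (rp n)))^2 * Real.exp ((d:ℝ) * Real.log (rp n)) with hApdef
  set Bp : ℕ → ℝ := fun n =>
    (deriv v (Real.exp (Real.log (rp n))))^2 * Real.exp ((d:ℝ) * Real.log (rp n)) with hBpdef
  set An : ℕ → ℝ := fun n =>
    v (Real.exp (Real.log (rn n)))^2 * Real.exp ((d:ℝ) * Real.log (rn n)) with hAndef
  set Bn : ℕ → ℝ := fun n =>
    (deriv v (Real.exp (Real.log (rn n))))^2 * Real.exp ((d:ℝ) * Real.log (rn n)) with hBndef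
  have hAple : ∀ n : ℕ, Ap n ≤ 2*((μ (Ioi ((n:ℝ)+1))).toReal + ((n:ℝ)+1)⁻¹) := by
    intro n
    rw [hApdef]
    simp only []
    rw [Real.exp_log (hrp0 n), exp_mul_log_eq_zpow d (hrp0 n)]
    exact hrp3 n
  have hBple : ∀ n : ℕ, Bp n ≤ 2*((μ (Ioi ((n:ℝ)+1))).toReal + ((n:ℝ)+1)⁻¹) := by
    intro n
    rw [hBpdef]
    simp only []
    rw [Real.exp_log (hrp0 n), exp_mul_log_eq_zpow d (hrp0 n)]
    exact hrp4 n
  have hAnle : ∀ n : ℕ, An n ≤ 2*((μ (Ioc 0 ((n:ℝ)+1)⁻¹)).toReal + ((n:ℝ)+1)⁻¹) := by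
    intro n
    rw [hAndef]
    simp only []
    rw [Real.exp_log (hrn0 n), exp_mul_log_eq_zpow d (hrn0 n)]
    exact hrn3 n
  have hBnle : ∀ n : ℕ, Bn n ≤ 2*((μ (Ioc 0 ((n:ℝ)+1)⁻¹)).toReal + ((n:ℝ)+1)⁻¹) := by
    intro n
    rw [hBndef]
    simp only []
    rw [Real.exp_log (hrn0 n), exp_mul_log_eq_zpow d (hrn0 n)]
    exact hrn4 n
  have hAp0 : Tendsto Ap atTop (𝓝 0) :=
    squeeze_zero (fun n => by rw [hApdef]; positivity) hAple hDp
  have hBp0 : Tendsto Bp atTop (𝓝 0) :=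
    squeeze_zero (fun n => by rw [hBpdef]; positivity) hBple hDp
  have hAn0 : Tendsto An atTop (𝓝 0) :=
    squeeze_zero (fun n => by rw [hAndef]; positivity) hAnle hDn
  have hBn0 : Tendsto Bn atTop (𝓝 0) :=
    squeeze_zero (fun n => by rw [hBndef]; positivity) hBnle hDn
  -- A 0 = 0
  have hA2 : ∀ n : ℕ, (A 0)^2
      ≤ 3*(Ap n * (deriv γ₂ (Real.log (rp n)) * Real.exp ((d:ℝ)*Real.log (rp n)))^2
         + Ap n * (γ₂ (Real.log (rp n)) * Real.exp ((d:ℝ)*Real.log (rp n)))^2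
         + Bp n * (γ₂ (Real.log (rp n)) * Real.exp ((d:ℝ)*Real.log (rp n)))^2) := by
    intro n
    have hs0 : 0 ≤ Real.log (rp n) :=
      Real.log_nonneg (by nlinarith [hrp1 n, (Nat.cast_nonneg n : (0:ℝ) ≤ n)])
    have hcb := core_bound (d:ℝ) hd4 (Real.log (rp n)) hs0
        (v (Real.exp (Real.log (rp n)))) (deriv v (Real.exp (Real.log (rp n))))
        (deriv γ₂ (Real.log (rp n))) (γ₂ (Real.log (rp n)))
    rw [hAconst 0 (Real.log (rp n)), hApdef, hBpdef]
    simp only [hAdef, hγdef, hG1]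
    exact hcb
  have hRHSA : Tendsto (fun n : ℕ =>
      3*(Ap n * (deriv γ₂ (Real.log (rp n)) * Real.exp ((d:ℝ)*Real.log (rp n)))^2
         + Ap n * (γ₂ (Real.log (rp n)) * Real.exp ((d:ℝ)*Real.log (rp n)))^2
         + Bp n * (γ₂ (Real.log (rp n)) * Real.exp ((d:ℝ)*Real.log (rp n)))^2))
      atTop (𝓝 0) := by
    have hKsq : Tendsto (fun n : ℕ =>
        (γ₂ (Real.log (rp n)) * Real.exp ((d:ℝ)*Real.log (rp n)))^2) atTop (𝓝 0) := by
      simpa [pow_two] using hKn.mul hKn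
    have hK'sq : Tendsto (fun n : ℕ =>
        (deriv γ₂ (Real.log (rp n)) * Real.exp ((d:ℝ)*Real.log (rp n)))^2) atTop (𝓝 0) := by
      simpa [pow_two] using hK'n.mul hK'n
    have := ((hAp0.mul hK'sq).add ((hAp0.mul hKsq).add (hBp0.mul hKsq))).const_mul 3
    simpa [mul_add, add_assoc] using this
  have hA0 : A 0 = 0 := by
    have h1 : (A 0)^2 ≤ 0 := ge_of_tendsto' hRHSA hA2
    have h2 := sq_nonneg (A 0)
    nlinarith
  -- B 0 = 0
  obtain ⟨c₁, hc₁⟩ := hγ₁asym.bound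
  obtain ⟨c₂, hc₂⟩ := hγ₁'asym.bound
  have hev := (hc₁.and (hc₂.and (eventually_le_atBot (0:ℝ))))
  rw [eventually_atBot] at hev
  obtain ⟨T₀, hT₀⟩ := hev
  set C : ℝ := |c₁| + |c₂| + 2 with hCdef
  have hC0 : 0 ≤ C := by positivity
  have hbound : ∀ t ≤ T₀, |γ₁ t| ≤ C * Real.exp t ∧ |deriv γ₁ t| ≤ C * Real.exp t := by
    intro t ht
    obtain ⟨h1, h2, h3⟩ := hT₀ t ht
    rw [Real.norm_eq_abs, Real.norm_eq_abs, abs_of_pos (Real.exp_pos _)] at h1 h2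
    have he3 : Real.exp (3*t) ≤ Real.exp t := Real.exp_le_exp.2 (by linarith)
    have hep : 0 < Real.exp (3*t) := Real.exp_pos _
    have hept : 0 < Real.exp t := Real.exp_pos t
    constructor
    · calc |γ₁ t| = |(γ₁ t - Real.exp t) + Real.exp t| := by ring_nf
      _ ≤ |γ₁ t - Real.exp t| + |Real.exp t| := abs_add_le _ _
      _ ≤ c₁ * Real.exp (3*t) + Real.exp t := by
          rw [abs_of_pos hept]; exact add_le_add_left h1 _
      _ ≤ C * Real.exp t := by
          nlinarith [le_abs_self c₁, abs_nonneg c₁, abs_nonneg c₂,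
            mul_le_mul_of_nonneg_left he3 (abs_nonneg c₁)]
    · calc |deriv γ₁ t| = |(deriv γ₁ t - Real.exp t) + Real.exp t| := by ring_nf
      _ ≤ |deriv γ₁ t - Real.exp t| + |Real.exp t| := abs_add_le _ _
      _ ≤ c₂ * Real.exp (3*t) + Real.exp t := by
          rw [abs_of_pos hept]; exact add_le_add_left h2 _
      _ ≤ C * Real.exp t := by
          nlinarith [le_abs_self c₂, abs_nonneg c₁, abs_nonneg c₂,
            mul_le_mul_of_nonneg_left he3 (abs_nonneg c₂)]
  have hevn : ∀ᶠ n : ℕ in atTop, Real.log (rn n) ≤ T₀ :=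
    htn.eventually (eventually_le_atBot T₀)
  have hB2 : ∀ᶠ n : ℕ in atTop, (Bf 0)^2
      ≤ 3*(C^2 * An n + C^2 * Bn n + C^2 * An n) := by
    filter_upwards [hevn] with n hn
    have hrn1' : rn n ≤ 1 := le_trans (hrn2 n) (by
      rw [inv_le_one_iff₀]
      right
      nlinarith [(Nat.cast_nonneg n : (0:ℝ) ≤ n)])
    have hs0 : Real.log (rn n) ≤ 0 := Real.log_nonpos (hrn0 n).le hrn1'
    have hcb := core_bound2 (d:ℝ) hd4 (Real.log (rn n)) hs0
        (v (Real.exp (Real.log (rn n)))) (deriv v (Real.exp (Real.log (rn n))))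
        (γ₁ (Real.log (rn n))) (deriv γ₁ (Real.log (rn n))) C hC0
        (hbound _ hn).1 (hbound _ hn).2
    rw [hBconst 0 (Real.log (rn n)), hAndef, hBndef]
    simp only [hBdef, hγdef, hG1]
    exact hcb
  have hRHSB : Tendsto (fun n : ℕ => 3*(C^2 * An n + C^2 * Bn n + C^2 * An n))
      atTop (𝓝 0) := by
    have := (((hAn0.const_mul (C^2)).add (hBn0.const_mul (C^2))).add
      (hAn0.const_mul (C^2))).const_mul 3
    simpa [mul_add, add_assoc] using this
  have hB0 : Bf 0 = 0 := by
    have h1 : (Bf 0)^2 ≤ 0 := ge_of_tendsto hRHSB hB2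
    have h2 := sq_nonneg (Bf 0)
    nlinarith
  -- Cramer identity
  have hWγ : ∀ t, Wf t * γ t = A t * γ₁ t + Bf t * γ₂ t := by
    intro t
    simp only [hAdef, hBdef, hWdef]
    ring
  have hWγ0 : ∀ t, Wf 0 * γ t = 0 := by
    intro t
    have h := hWγ t
    rw [hAconst t 0, hBconst t 0, hA0, hB0, hWconst t 0] at h
    simpa using h
  -- Wf 0 ≠ 0
  have hW0 : Wf 0 ≠ 0 := by
    intro hw
    have hWall : ∀ t, γ₁ t * deriv γ₂ t - γ₂ t * deriv γ₁ t = 0 := by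
      intro t
      have h := hWconst t 0
      rw [hw] at h
      simp only [hWdef] at h
      rcases mul_eq_zero.1 h with h' | h'
      · exact h'
      · exact absurd h' (Real.exp_pos _).ne'
    obtain ⟨t₀, ht₀⟩ := hγ₂ne
    set c : ℝ := γ₁ t₀ / γ₂ t₀ with hcdef
    set η : ℝ → ℝ := fun t => γ₁ t - c * γ₂ t with hηdef
    have hηC : ContDiff ℝ 2 η := hγ₁C.sub (contDiff_const.mul hγ₂C)
    have hηd : deriv η = fun t => deriv γ₁ t - c * deriv γ₂ t := by
      funext t
      exact ((hγ₁d t).sub ((hγ₂d t).const_mul c)).deriv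
    have hηdd : ∀ t, deriv (deriv η) t = deriv (deriv γ₁) t - c * deriv (deriv γ₂) t := by
      intro t
      rw [hηd]
      exact ((hγ₁dd t).sub ((hγ₂dd t).const_mul c)).deriv
    set q : ℝ → ℝ := fun t => (3 - (d:ℝ)) + 3*Ψ t^2 + lam*Real.exp (2*t) - Real.exp (4*t)
      with hqdef
    have hq : Continuous q := by
      rw [hqdef]
      have h1 : Continuous fun t : ℝ => 3*Ψ t^2 := continuous_const.mul ((hΨC.continuous).pow 2)
      have h2 : Continuous fun t : ℝ => lam * Real.exp (2*t) :=
        continuous_const.mul (Real.continuous_exp.comp (continuous_const.mul continuous_id))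
      have h3 : Continuous fun t : ℝ => Real.exp (4*t) :=
        Real.continuous_exp.comp (continuous_const.mul continuous_id)
      exact ((continuous_const.add h1).add h2).sub h3
    have heqη : ∀ t, deriv (deriv η) t = -((d:ℝ)-4) * deriv η t - q t * η t := by
      intro t
      rw [hηdd, hηd, hηdef, hqdef]
      simp only []
      linear_combination (hγ₁eq t) - c * (hγ₂eq t)
    have h0 : η t₀ = 0 := by
      rw [hηdef]
      simp only [hcdef]
      rw [div_mul_cancel₀ _ ht₀, sub_self]
    have h0' : deriv η t₀ = 0 := by
      rw [hηd]
      simp only [hcdef]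
      have := hWall t₀
      field_simp
      linarith [hWall t₀]
    have hη0 := ode_unique ((d:ℝ)-4) q η hq hηC heqη t₀ h0 h0'
    have hdep := hindep 1 (-c) (fun t => by
      have := hη0 t
      rw [hηdef] at this
      simp only [] at this
      linarith)
    exact absurd hdep.1 one_ne_zero
  -- conclusion
  have hγ0 : ∀ t, γ t = 0 := by
    intro t
    rcases mul_eq_zero.1 (hWγ0 t) with h | h
    · exact absurd h hW0
    · exact h
  intro r hr
  have h := hγ0 (Real.log r)
  rw [hγdef] at h
  simp only [] at h
  rw [Real.exp_log hr] at h
  rcases mul_eq_zero.1 h with h' | h'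
  · exact absurd h' (ne_of_gt hr)
  · exact h'
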